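/- Let m be an odd positive integer and let B be a binomial random variable with m trials and success probability 2/3. Then P(B ≥ (m+1)/2) ≥ 1/2. -/

import Mathlib

open MeasureTheory ENNReal

/-- The Bernoulli probability measure on `Bool` giving mass `q` to `true`. -/
noncomputable def bernoulliM (q : ℝ) : Measure Bool :=
  ENNReal.ofReal q • Measure.dirac true + ENNReal.ofReal (1 - q) • Measure.dirac false

/-- The binomial distribution with `m` trials and success probability `q`: the distribution
of the number of successes in `m` independent Bernoulli trials each succeeding with
probability `q`. -/
noncomputable def binomialM (m : ℕ) (q : ℝ) : Measure ℕ :=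
  Measure.map (fun v : Fin m → Bool => (Finset.univ.filter fun k => v k = true).card)
    (Measure.pi fun _ : Fin m => bernoulliM q)

instance (q : ℝ) : IsFiniteMeasure (bernoulliM q) := by
  constructor
  simp only [bernoulliM, Measure.coe_add, Measure.smul_apply, Pi.add_apply, smul_eq_mul]
  simp [Measure.dirac_apply]

lemma bern_true (q : ℝ) : bernoulliM q {true} = ENNReal.ofReal q := by
  simp [bernoulliM, Measure.dirac_apply]

lemma bern_false (q : ℝ) : bernoulliM q {false} = ENNReal.ofReal (1 - q) := by
  simp [bernoulliM, Measure.dirac_apply]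

lemma bern_univ : bernoulliM (2/3) Set.univ = 1 := by
  simp only [bernoulliM, Measure.coe_add, Measure.smul_apply, Pi.add_apply, smul_eq_mul]
  rw [Measure.dirac_apply_of_mem (Set.mem_univ _), Measure.dirac_apply_of_mem (Set.mem_univ _)]
  rw [mul_one, mul_one, ← ENNReal.ofReal_add (by norm_num) (by norm_num)]
  norm_num

lemma meas_finset_sum {α : Type*} [MeasurableSpace α] [MeasurableSingletonClass α]
    (μ : Measure α) (s : Finset α) : μ ↑s = ∑ x ∈ s, μ {x} := by
  rw [show (↑s : Set α) = ⋃ x ∈ s, ({x} : Set α) from by ext; simp]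
  rw [measure_biUnion_finset ?_ (fun b _ => measurableSet_singleton b)]
  intro x _ y _ hxy
  simp [Function.onFun, Set.disjoint_singleton, hxy]

/-- number of successes -/
def cnt {m : ℕ} (v : Fin m → Bool) : ℕ := (Finset.univ.filter fun k => v k = true).card

lemma cnt_le {m : ℕ} (v : Fin m → Bool) : cnt v ≤ m := by
  simpa [cnt] using Finset.card_filter_le Finset.univ (fun k => v k = true)

lemma pi_singleton (m : ℕ) (v : Fin m → Bool) :
    Measure.pi (fun _ : Fin m => bernoulliM (2/3)) {v}
      = ENNReal.ofReal (2/3) ^ cnt v * ENNReal.ofReal (1/3) ^ (m - cnt v) := by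
  rw [show ({v} : Set (Fin m → Bool)) = Set.pi Set.univ (fun i => {v i}) from by
    ext w; simp [Set.mem_pi, funext_iff]]
  rw [Measure.pi_pi]
  rw [← Finset.prod_filter_mul_prod_filter_not Finset.univ (fun i => v i = true)]
  have h1 : ∀ i ∈ Finset.univ.filter (fun i => v i = true),
      bernoulliM (2/3) {v i} = ENNReal.ofReal (2/3) := by
    intro i hi; rw [Finset.mem_filter] at hi; rw [hi.2, bern_true]
  have h2 : ∀ i ∈ Finset.univ.filter (fun i => ¬ v i = true),
      bernoulliM (2/3) {v i} = ENNReal.ofReal (1/3) := by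
    intro i hi; rw [Finset.mem_filter] at hi
    have : v i = false := by simpa using hi.2
    rw [this, bern_false]; norm_num
  rw [Finset.prod_congr rfl h1, Finset.prod_congr rfl h2,
    Finset.prod_const, Finset.prod_const]
  have hc : (Finset.univ.filter (fun i => v i = true)).card
      + (Finset.univ.filter (fun i => ¬ v i = true)).card = m := by
    rw [Finset.card_filter_add_card_filter_not]; simp
  have : (Finset.univ.filter (fun i => ¬ v i = true)).card = m - cnt v := by
    simp only [cnt]; omega
  rw [this]; rfl

lemma cnt_neg {m : ℕ} (v : Fin m → Bool) : cnt (fun i => !(v i)) = m - cnt v := by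
  have hc : (Finset.univ.filter (fun i => v i = true)).card
      + (Finset.univ.filter (fun i => ¬ v i = true)).card = m := by
    rw [Finset.card_filter_add_card_filter_not]; simp
  have h2 : cnt (fun i => !(v i)) = (Finset.univ.filter (fun i => ¬ v i = true)).card := by
    simp only [cnt]
    congr 1
    apply Finset.filter_congr
    intro i _
    simp
  have h3 : (Finset.univ.filter (fun i => v i = true)).card = cnt v := rfl
  omega

/-- Let `m` be an odd positive integer and let `B` be a binomial random variable with `m`
trials and success probability `2/3`. Then `P(B ≥ (m+1)/2) ≥ 1/2`. -/
theorem binomial_two_thirds_odd (m : ℕ) (hm : 0 < m) (ho : Odd m) :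
    ENNReal.ofReal (1 / 2) ≤ binomialM m (2 / 3) {r : ℕ | (m + 1) / 2 ≤ r} := by
  obtain ⟨t, ht⟩ := ho
  set k : ℕ := (m + 1) / 2 with hk
  set μ : Measure (Fin m → Bool) := Measure.pi (fun _ : Fin m => bernoulliM (2/3)) with hμ
  set a : ℝ≥0∞ := ENNReal.ofReal (2/3) with ha
  set b : ℝ≥0∞ := ENNReal.ofReal (1/3) with hb
  have hba : b ≤ a := ENNReal.ofReal_le_ofReal (by norm_num)
  -- reduce to pi measure
  have hmap : binomialM m (2/3) {r : ℕ | k ≤ r} = μ {v | k ≤ cnt v} := by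
    rw [binomialM, Measure.map_apply (measurable_of_countable _) ((Set.to_countable _).measurableSet)]
    rfl
  rw [hmap]
  set A : Set (Fin m → Bool) := {v | k ≤ cnt v} with hA
  have hAm : MeasurableSet A := (Set.to_countable A).measurableSet
  -- finsets
  set T : Finset (Fin m → Bool) := Finset.univ.filter (fun v => k ≤ cnt v) with hT
  set S : Finset (Fin m → Bool) := Finset.univ.filter (fun v => ¬ k ≤ cnt v) with hS
  have hAT : A = ↑T := by ext v; simp [hA, hT]
  have hAS : Aᶜ = ↑S := by ext v; simp [hA, hS]
  -- total mass 1
  have huniv : μ Set.univ = 1 := by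
    rw [hμ, Measure.pi_univ]
    simp only [bern_univ, Finset.prod_const, one_pow]
  have hsplit : μ A + μ Aᶜ = 1 := by
    rw [measure_add_measure_compl hAm, huniv]
  -- compl ≤ A via negation
  have hneg_inj : Function.Injective (fun v : Fin m → Bool => fun i => !(v i)) := by
    intro v w h
    funext i
    have := congrFun h i
    simpa using this
  have hcompl : μ Aᶜ ≤ μ A := by
    rw [hAS, hAT, meas_finset_sum, meas_finset_sum]
    calc ∑ v ∈ S, μ {v} ≤ ∑ v ∈ S, μ {fun i => !(v i)} := by
          apply Finset.sum_le_sum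
          intro v hv
          rw [hS, Finset.mem_filter] at hv
          have hcv : cnt v ≤ t := by omega
          rw [pi_singleton, pi_singleton, cnt_neg]
          have h1 : m - (m - cnt v) = cnt v := by have := cnt_le v; omega
          rw [h1]
          have h2 : m - cnt v = cnt v + (m - 2 * cnt v) := by omega
          rw [h2, pow_add, pow_add]
          calc a ^ cnt v * (b ^ cnt v * b ^ (m - 2 * cnt v))
              = (a ^ cnt v * b ^ cnt v) * b ^ (m - 2 * cnt v) := by ring
            _ ≤ (a ^ cnt v * b ^ cnt v) * a ^ (m - 2 * cnt v) := by
                gcongr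
            _ = a ^ cnt v * a ^ (m - 2 * cnt v) * b ^ cnt v := by ring
      _ = ∑ w ∈ S.image (fun v i => !(v i)), μ {w} :=
          (Finset.sum_image (f := fun w => μ {w}) (fun x _ y _ h => hneg_inj h)).symm
      _ ≤ ∑ w ∈ T, μ {w} := by
          apply Finset.sum_le_sum_of_subset
          intro w hw
          rw [Finset.mem_image] at hw
          obtain ⟨v, hv, rfl⟩ := hw
          rw [hS, Finset.mem_filter] at hv
          rw [hT, Finset.mem_filter]
          refine ⟨Finset.mem_univ _, ?_⟩
          rw [cnt_neg]
          omega
  -- conclude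
  have h1 : (1 : ℝ≥0∞) ≤ μ A * 2 := by
    calc (1 : ℝ≥0∞) = μ A + μ Aᶜ := hsplit.symm
      _ ≤ μ A + μ A := by gcongr
      _ = μ A * 2 := by ring
  have h2 : ENNReal.ofReal (1/2) = 1 / 2 := by
    rw [ENNReal.ofReal_div_of_pos (by norm_num)]
    norm_num
  rw [h2]
  rw [ENNReal.div_le_iff_le_mul (Or.inl two_ne_zero) (Or.inl ENNReal.ofNat_ne_top)]
  exact h1
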